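/- Let K be an integral domain properly contained in a field L. The composite K + XL[X] is a GCD-domain if and only if L is the fraction field of K and K is a GCD-domain. -/

import Mathlib

section CompositeSetup

variable {L : Type*} [Field L]

/-- The polynomial composite `K + X L[X]` as a subring of `L[X]`. -/
def composite (K : Subring L) : Subring (Polynomial L) where
  carrier := {p | p.coeff 0 ∈ K}
  one_mem' := by simpa using K.one_mem
  zero_mem' := by simpa using K.zero_mem
  add_mem' := by
    intro a b ha hb
    simpa [Polynomial.coeff_add] using K.add_mem ha hb
  neg_mem' := by
    intro a ha
    simpa [Polynomial.coeff_neg] using K.neg_mem ha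
  mul_mem' := by
    intro a b ha hb
    simpa [Polynomial.mul_coeff_zero] using K.mul_mem ha hb

/-- `L` is the fraction field of the subring `K`. -/
def FracOfField (K : Subring L) : Prop :=
  ∀ l : L, ∃ a ∈ K, ∃ b ∈ K, b ≠ 0 ∧ l * b = a

/-- A Prüfer domain: every nonzero finitely generated ideal is invertible. -/
def IsPruferDomain (A : Type*) [CommRing A] [IsDomain A] : Prop :=
  ∀ I : Ideal A, I ≠ ⊥ → I.FG →
    IsUnit (I : FractionalIdeal (nonZeroDivisors A) (FractionRing A))

/-- A GCD domain: any two nonzero elements admit a greatest common divisor. -/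
def IsGCDDomain (A : Type*) [CommRing A] [IsDomain A] : Prop :=
  ∀ a b : A, a ≠ 0 → b ≠ 0 →
    ∃ g : A, g ∣ a ∧ g ∣ b ∧ ∀ c : A, c ∣ a → c ∣ b → c ∣ g

end CompositeSetup

open Polynomial

section Helpers

variable {L : Type*} [Field L] {K : Subring L}

lemma mem_composite {p : Polynomial L} : p ∈ composite K ↔ p.coeff 0 ∈ K := Iff.rfl

lemma comp_dvd_iff {x y : ↥(composite K)} :
    x ∣ y ↔ ∃ q : Polynomial L, q.coeff 0 ∈ K ∧ (y : Polynomial L) = (x : Polynomial L) * q := by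
  constructor
  · rintro ⟨c, rfl⟩
    exact ⟨(c : Polynomial L), c.2, rfl⟩
  · rintro ⟨q, hq, he⟩
    exact ⟨⟨q, hq⟩, Subtype.ext he⟩

lemma comp_coe_ne_zero {x : ↥(composite K)} (hx : x ≠ 0) : (x : Polynomial L) ≠ 0 :=
  fun h => hx (Subtype.ext h)

/-- factor out the largest power of X -/
lemma exists_X_pow_factor (p : Polynomial L) (hp : p ≠ 0) :
    ∃ (m : ℕ) (u : Polynomial L), p = X ^ m * u ∧ u.coeff 0 ≠ 0 := by
  obtain ⟨q, hq, hq2⟩ := p.exists_eq_pow_rootMultiplicity_mul_and_not_dvd hp 0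
  refine ⟨rootMultiplicity 0 p, q, by simpa using hq, ?_⟩
  intro h0
  exact hq2 (by simpa using (X_dvd_iff).2 h0)

lemma dvd_of_dvd_X_pow_mul {w u : Polynomial L} (hw : w.coeff 0 ≠ 0) :
    ∀ k : ℕ, w ∣ X ^ k * u → w ∣ u := by
  intro k
  induction k with
  | zero => intro h; simpa using h
  | succ k ih =>
    intro h
    obtain ⟨e, he⟩ := h
    have hXwe : (X : Polynomial L) ∣ w * e := by
      refine ⟨X ^ k * u, ?_⟩
      rw [← he]; ring
    rcases (prime_X (R := L)).2.2 w e hXwe with hw' | he'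
    · exact absurd (X_dvd_iff.1 hw') hw
    · obtain ⟨e', rfl⟩ := he'
      refine ih ⟨e', mul_left_cancel₀ (X_ne_zero (R := L)) ?_⟩
      calc X * (X ^ k * u) = X ^ (k + 1) * u := by ring
        _ = w * (X * e') := he
        _ = X * (w * e') := by ring

lemma X_pow_mul_dvd {w u : Polynomial L} (hw : w.coeff 0 ≠ 0) (hu : u.coeff 0 ≠ 0) :
    ∀ {j m : ℕ}, X ^ j * w ∣ X ^ m * u → j ≤ m ∧ w ∣ u := by
  intro j
  induction j with
  | zero =>
    intro m h
    exact ⟨Nat.zero_le _, dvd_of_dvd_X_pow_mul hw m (by simpa using h)⟩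
  | succ j ih =>
    intro m h
    match m with
    | 0 =>
      exfalso
      have hXu : (X : Polynomial L) ∣ u := by
        have : (X : Polynomial L) ∣ X ^ (j + 1) * w := ⟨X ^ j * w, by ring⟩
        exact this.trans (by simpa using h)
      exact hu (X_dvd_iff.1 hXu)
    | m + 1 =>
      obtain ⟨e, he⟩ := h
      have h' : X ^ j * w ∣ X ^ m * u := by
        refine ⟨e, mul_left_cancel₀ (X_ne_zero (R := L)) ?_⟩
        calc X * (X ^ m * u) = X ^ (m + 1) * u := by ring
          _ = X ^ (j + 1) * w * e := he
          _ = X * (X ^ j * w * e) := by ring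
      obtain ⟨h1, h2⟩ := ih h'
      exact ⟨Nat.succ_le_succ h1, h2⟩

/-- "Euclid" consequence of gcd existence: if s*b = t*a and c is a gcd of a,b then a ∣ s*c. -/
lemma gcd_euclid {A : Type*} [CommRing A] [IsDomain A] (hA : IsGCDDomain A)
    {a b s t c : A} (ha : a ≠ 0) (hb : b ≠ 0) (hst : s * b = t * a)
    (hgr : ∀ x : A, x ∣ a → x ∣ b → x ∣ c) : a ∣ s * c := by
  by_cases hs : s = 0
  · simp [hs]
  obtain ⟨e, hea, heb, hegr⟩ := hA (s * a) (s * b) (mul_ne_zero hs ha) (mul_ne_zero hs hb)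
  -- s ∣ e
  obtain ⟨e', rfl⟩ := hegr s ⟨a, rfl⟩ ⟨b, rfl⟩
  -- e' ∣ a, e' ∣ b
  have he'a : e' ∣ a := by
    obtain ⟨k, hk⟩ := hea
    exact ⟨k, mul_left_cancel₀ hs (by rw [hk]; ring)⟩
  have he'b : e' ∣ b := by
    obtain ⟨k, hk⟩ := heb
    exact ⟨k, mul_left_cancel₀ hs (by rw [hk]; ring)⟩
  have he'c : e' ∣ c := hgr e' he'a he'b
  have hae : a ∣ s * e' := hegr a (Dvd.dvd.mul_left dvd_rfl s) ⟨t, by rw [hst]; ring⟩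
  exact hae.trans (mul_dvd_mul_left s he'c)

end Helpers

section Forward

variable {L : Type*} [Field L]

/-- constants divide in K iff in the composite -/
lemma gcdK_of_gcd (K : Subring L) (h : IsGCDDomain ↥(composite K)) : IsGCDDomain ↥K := by
  intro a b ha hb
  have haL : (a : L) ≠ 0 := fun h0 => ha (Subtype.ext h0)
  have hbL : (b : L) ≠ 0 := fun h0 => hb (Subtype.ext h0)
  set ca : ↥(composite K) := ⟨C (a : L), by simpa [mem_composite] using a.2⟩ with hca
  set cb : ↥(composite K) := ⟨C (b : L), by simpa [mem_composite] using b.2⟩ with hcb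
  have hca0 : ca ≠ 0 := fun h0 => haL (by simpa [hca] using congrArg (fun x : ↥(composite K) => (x : Polynomial L).coeff 0) h0)
  have hcb0 : cb ≠ 0 := fun h0 => hbL (by simpa [hcb] using congrArg (fun x : ↥(composite K) => (x : Polynomial L).coeff 0) h0)
  obtain ⟨g, hg1, hg2, hg3⟩ := h ca cb hca0 hcb0
  obtain ⟨e, heK, he⟩ := comp_dvd_iff.1 hg1
  obtain ⟨e2, he2K, he2⟩ := comp_dvd_iff.1 hg2
  -- g is a constant
  have hCa : (ca : Polynomial L) = C (a : L) := rfl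
  have hgne : (g : Polynomial L) ≠ 0 := by
    intro h0
    apply haL
    have : C (a : L) = 0 := by rw [hCa] at he; rw [he, h0, zero_mul]
    simpa using congrArg (fun p : Polynomial L => p.coeff 0) this
  have hene : e ≠ 0 := by
    intro h0
    apply haL
    have : C (a : L) = 0 := by rw [hCa] at he; rw [he, h0, mul_zero]
    simpa using congrArg (fun p : Polynomial L => p.coeff 0) this
  have hdeg : (g : Polynomial L).natDegree = 0 := by
    have := natDegree_mul hgne hene
    have h2 : ((g : Polynomial L) * e).natDegree = 0 := by
      rw [← he, hCa, natDegree_C]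
    omega
  have hgC : (g : Polynomial L) = C ((g : Polynomial L).coeff 0) := eq_C_of_natDegree_eq_zero hdeg
  refine ⟨⟨(g : Polynomial L).coeff 0, g.2⟩, ?_, ?_, ?_⟩
  · refine ⟨⟨e.coeff 0, heK⟩, Subtype.ext ?_⟩
    have := congrArg (fun p : Polynomial L => p.coeff 0) he
    simpa [mul_coeff_zero, hca] using this
  · refine ⟨⟨e2.coeff 0, he2K⟩, Subtype.ext ?_⟩
    have := congrArg (fun p : Polynomial L => p.coeff 0) he2
    simpa [mul_coeff_zero, hcb] using this
  · rintro c ⟨k, hk⟩ ⟨k2, hk2⟩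
    have hcc : (⟨C (c : L), by simpa [mem_composite] using c.2⟩ : ↥(composite K)) ∣ g := by
      apply hg3
      · refine comp_dvd_iff.2 ⟨C (k : L), by simpa using k.2, ?_⟩
        show C (a : L) = C (c : L) * C (k : L)
        rw [← C_mul]
        exact congrArg C (congrArg Subtype.val hk)
      · refine comp_dvd_iff.2 ⟨C (k2 : L), by simpa using k2.2, ?_⟩
        show C (b : L) = C (c : L) * C (k2 : L)
        rw [← C_mul]
        exact congrArg C (congrArg Subtype.val hk2)
    obtain ⟨q, hqK, hq⟩ := comp_dvd_iff.1 hcc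
    refine ⟨⟨q.coeff 0, hqK⟩, Subtype.ext ?_⟩
    have := congrArg (fun p : Polynomial L => p.coeff 0) hq
    simpa [mul_coeff_zero] using this

lemma frac_of_gcd (K : Subring L) (hKne : K ≠ ⊤) (h : IsGCDDomain ↥(composite K)) :
    FracOfField K := by
  intro l
  by_cases hl : l = 0
  · exact ⟨0, K.zero_mem, 1, K.one_mem, one_ne_zero, by simp [hl]⟩
  have hx2m : ((X : Polynomial L) ^ 2).coeff 0 ∈ K := by simpa using K.zero_mem
  have hy2m : (C l * (X : Polynomial L) ^ 2).coeff 0 ∈ K := by simpa using K.zero_mem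
  have hXm : (X : Polynomial L).coeff 0 ∈ K := by simpa using K.zero_mem
  set x2 : ↥(composite K) := ⟨X ^ 2, hx2m⟩ with hx2
  set y2 : ↥(composite K) := ⟨C l * X ^ 2, hy2m⟩ with hy2
  have hx2ne : x2 ≠ 0 := by
    intro h0
    have : (X : Polynomial L) ^ 2 = 0 := congrArg Subtype.val h0
    simpa using this
  have hy2ne : y2 ≠ 0 := by
    intro h0
    have : C l * (X : Polynomial L) ^ 2 = 0 := congrArg Subtype.val h0
    simp [hl] at this
  obtain ⟨g, hg1, hg2, hg3⟩ := h x2 y2 hx2ne hy2ne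
  -- X divides g
  have hXg : (⟨X, hXm⟩ : ↥(composite K)) ∣ g := by
    apply hg3
    · refine comp_dvd_iff.2 ⟨X, hXm, ?_⟩
      show (X : Polynomial L) ^ 2 = X * X
      ring
    · refine comp_dvd_iff.2 ⟨C l * X, by simpa using K.zero_mem, ?_⟩
      show C l * (X : Polynomial L) ^ 2 = X * (C l * X)
      ring
  obtain ⟨hpoly, hhK, hgXh⟩ := comp_dvd_iff.1 hXg
  have hgXh' : (g : Polynomial L) = X * hpoly := hgXh
  obtain ⟨e, heK, he⟩ := comp_dvd_iff.1 hg1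
  have he' : (X : Polynomial L) ^ 2 = (g : Polynomial L) * e := he
  -- X^2 = X * hpoly * e, cancel X : X = hpoly * e
  have hXhe : (X : Polynomial L) = hpoly * e := by
    apply mul_left_cancel₀ (X_ne_zero (R := L))
    calc X * X = (X : Polynomial L) ^ 2 := by ring
      _ = (g : Polynomial L) * e := he'
      _ = X * hpoly * e := by rw [hgXh']
      _ = X * (hpoly * e) := by ring
  have hhne : hpoly ≠ 0 := by
    intro h0; rw [h0, zero_mul] at hXhe; exact X_ne_zero hXhe
  have hene : e ≠ 0 := by
    intro h0; rw [h0, mul_zero] at hXhe; exact X_ne_zero hXhe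
  have hdegs : hpoly.natDegree + e.natDegree = 1 := by
    have := natDegree_mul hhne hene
    rw [← hXhe, natDegree_X] at this
    omega
  rcases Nat.eq_zero_or_pos e.natDegree with hde | hde
  · -- e is a nonzero constant e₀ ∈ K
    have heC : e = C (e.coeff 0) := eq_C_of_natDegree_eq_zero hde
    have he0ne : e.coeff 0 ≠ 0 := by
      intro h0; apply hene; rw [heC, h0, C_0]
    obtain ⟨q, hqK, hq⟩ := comp_dvd_iff.1 hg2
    have hq' : C l * (X : Polynomial L) ^ 2 = (g : Polynomial L) * q := hq
    have h1 : hpoly * C (e.coeff 0) = X := by rw [← heC, ← hXhe]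
    have key : C (e.coeff 0 * l) * X ^ 2 = q * X ^ 2 := by
      calc C (e.coeff 0 * l) * X ^ 2 = C (e.coeff 0) * (C l * X ^ 2) := by rw [C_mul]; ring
        _ = C (e.coeff 0) * ((g : Polynomial L) * q) := by rw [hq']
        _ = C (e.coeff 0) * (X * hpoly * q) := by rw [hgXh']
        _ = X * (hpoly * C (e.coeff 0)) * q := by ring
        _ = X * X * q := by rw [h1]
        _ = q * X ^ 2 := by ring
    have hqval : C (e.coeff 0 * l) = q :=
      mul_right_cancel₀ (pow_ne_zero 2 (X_ne_zero (R := L))) key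
    have hle0 : e.coeff 0 * l ∈ K := by
      rw [← hqval] at hqK; simpa using hqK
    exact ⟨e.coeff 0 * l, hle0, e.coeff 0, heK, he0ne, by ring⟩
  · -- hpoly is a constant h₀ ∈ K; derive K = ⊤, contradiction
    exfalso
    have hdh : hpoly.natDegree = 0 := by omega
    have hhC : hpoly = C (hpoly.coeff 0) := eq_C_of_natDegree_eq_zero hdh
    have hh0ne : hpoly.coeff 0 ≠ 0 := by
      intro h0'; apply hhne; rw [hhC, h0', C_0]
    apply hKne
    ext y
    simp only [Subring.mem_top, iff_true]
    by_cases hy : y = 0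
    · rw [hy]; exact K.zero_mem
    have hbne : hpoly.coeff 0 / y ≠ 0 := div_ne_zero hh0ne hy
    set b := hpoly.coeff 0 / y with hb
    have hbXg : (⟨C b * X, by simpa [mem_composite] using K.zero_mem⟩ : ↥(composite K)) ∣ g := by
      apply hg3
      · refine comp_dvd_iff.2 ⟨C b⁻¹ * X, by simpa using K.zero_mem, ?_⟩
        show (X : Polynomial L) ^ 2 = C b * X * (C b⁻¹ * X)
        rw [show C b * X * (C b⁻¹ * X) = C (b * b⁻¹) * X ^ 2 by rw [C_mul]; ring,
          mul_inv_cancel₀ hbne, C_1, one_mul]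
      · refine comp_dvd_iff.2 ⟨C (l / b) * X, by simpa using K.zero_mem, ?_⟩
        show C l * (X : Polynomial L) ^ 2 = C b * X * (C (l / b) * X)
        rw [show C b * X * (C (l / b) * X) = C (b * (l / b)) * X ^ 2 by rw [C_mul]; ring,
          mul_div_cancel₀ _ hbne]
    obtain ⟨q, hqK, hq⟩ := comp_dvd_iff.1 hbXg
    have hq' : (g : Polynomial L) = C b * X * q := hq
    have hCq : C (hpoly.coeff 0) = C b * q := by
      apply mul_left_cancel₀ (X_ne_zero (R := L))
      calc X * C (hpoly.coeff 0) = X * hpoly := by rw [← hhC]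
        _ = (g : Polynomial L) := hgXh'.symm
        _ = C b * X * q := hq'
        _ = X * (C b * q) := by ring
    have hby : b * y = hpoly.coeff 0 := div_mul_cancel₀ _ hy
    have hqy : q = C y := by
      apply mul_left_cancel₀ (C_ne_zero.2 hbne)
      rw [← C_mul, hby]
      exact hCq.symm
    rw [hqy] at hqK
    simpa using hqK

end Forward

section Backward

variable {L : Type*} [Field L]

lemma backward_aux (K : Subring L) (hF : FracOfField K) (hG : IsGCDDomain ↥K)
    (f g : ↥(composite K)) (m n : ℕ) (u v : Polynomial L)
    (hu : u.coeff 0 ≠ 0) (hv : v.coeff 0 ≠ 0)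
    (hfu : (f : Polynomial L) = X ^ m * u) (hgv : (g : Polynomial L) = X ^ n * v)
    (hmn : m ≤ n) :
    ∃ d, d ∣ f ∧ d ∣ g ∧ ∀ c, c ∣ f → c ∣ g → c ∣ d := by
  classical
  have hune : u ≠ 0 := fun h0 => hu (by simp [h0])
  have hvne : v ≠ 0 := fun h0 => hv (by simp [h0])
  -- the normalized gcd h of u and v in L[X]
  set h0 : Polynomial L := EuclideanDomain.gcd u v with hh0def
  have hh0u : h0 ∣ u := EuclideanDomain.gcd_dvd_left u v
  have hh0v : h0 ∣ v := EuclideanDomain.gcd_dvd_right u v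
  have hh00 : h0.coeff 0 ≠ 0 := by
    intro hc
    obtain ⟨z, hz⟩ := hh0u
    apply hu
    rw [hz, mul_coeff_zero, hc, zero_mul]
  set h : Polynomial L := C (h0.coeff 0)⁻¹ * h0 with hhdef
  have hh1 : h.coeff 0 = 1 := by
    rw [hhdef, coeff_C_mul, inv_mul_cancel₀ hh00]
  have hh0h : h0 = C (h0.coeff 0) * h := by
    rw [hhdef, ← mul_assoc, ← C_mul, mul_inv_cancel₀ hh00, C_1, one_mul]
  have hhu : h ∣ u := dvd_trans ⟨C (h0.coeff 0), by linear_combination hh0h⟩ hh0u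
  have hhv : h ∣ v := dvd_trans ⟨C (h0.coeff 0), by linear_combination hh0h⟩ hh0v
  have hgr : ∀ w : Polynomial L, w ∣ u → w ∣ v → w ∣ h := by
    intro w hwu hwv
    exact dvd_trans (EuclideanDomain.dvd_gcd hwu hwv)
      ⟨C (h0.coeff 0)⁻¹, by rw [hhdef]; ring⟩
  obtain ⟨u', hu'⟩ := hhu
  obtain ⟨v', hv'⟩ := hhv
  have hu'0 : u'.coeff 0 = u.coeff 0 := by rw [hu', mul_coeff_zero, hh1, one_mul]
  have hv'0 : v'.coeff 0 = v.coeff 0 := by rw [hv', mul_coeff_zero, hh1, one_mul]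
  -- the scalar lam with the four key properties
  obtain ⟨lam, hlam0, hP2, hP3, hP4⟩ :
      ∃ lam : L, lam ≠ 0 ∧ lam⁻¹ * u.coeff 0 ∈ K ∧ (m = n → lam⁻¹ * v.coeff 0 ∈ K) ∧
        ∀ w0 : L, w0 ≠ 0 → w0⁻¹ * u.coeff 0 ∈ K → (m = n → w0⁻¹ * v.coeff 0 ∈ K) →
          w0⁻¹ * lam ∈ K := by
    by_cases hmn' : m = n
    · obtain ⟨a, haK, b, hbK, hb0, hab⟩ := hF (u.coeff 0 / v.coeff 0)
      have huv : u.coeff 0 * b = a * v.coeff 0 := by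
        field_simp at hab
        linear_combination hab
      have ha0 : a ≠ 0 := by
        intro h0'
        rw [h0', zero_mul] at huv
        rcases mul_eq_zero.1 huv with h1 | h1
        · exact hu h1
        · exact hb0 h1
      set aK : ↥K := ⟨a, haK⟩ with haKdef
      set bK : ↥K := ⟨b, hbK⟩ with hbKdef
      have haK0 : aK ≠ 0 := fun h0' => ha0 (congrArg Subtype.val h0')
      have hbK0 : bK ≠ 0 := fun h0' => hb0 (congrArg Subtype.val h0')
      obtain ⟨c, hca, hcb, hcg⟩ := hG aK bK haK0 hbK0
      have hc0 : (c : L) ≠ 0 := by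
        intro h0'
        obtain ⟨k, hk⟩ := hca
        apply ha0
        have := congrArg Subtype.val hk
        simpa [h0', haKdef] using this
      refine ⟨u.coeff 0 * c / a, div_ne_zero (mul_ne_zero hu hc0) ha0, ?_, ?_, ?_⟩
      · obtain ⟨k1, hk1⟩ := hca
        have hk1c : a = (c : L) * k1 := congrArg Subtype.val hk1
        have heq : (u.coeff 0 * c / a)⁻¹ * u.coeff 0 = (k1 : L) := by
          field_simp
          linear_combination hk1c
        rw [heq]; exact k1.2
      · intro _
        obtain ⟨k2, hk2⟩ := hcb
        have hk2c : b = (c : L) * k2 := congrArg Subtype.val hk2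
        have heq : (u.coeff 0 * c / a)⁻¹ * v.coeff 0 = (k2 : L) := by
          field_simp
          linear_combination u.coeff 0 * hk2c - huv
        rw [heq]; exact k2.2
      · intro w0 hw0 hsK htK
        set sK : ↥K := ⟨w0⁻¹ * u.coeff 0, hsK⟩ with hsKdef
        set tK : ↥K := ⟨w0⁻¹ * v.coeff 0, htK hmn'⟩ with htKdef
        have hst : sK * bK = tK * aK := by
          apply Subtype.ext
          show (w0⁻¹ * u.coeff 0) * b = (w0⁻¹ * v.coeff 0) * a
          linear_combination w0⁻¹ * huv
        obtain ⟨k3, hk3⟩ := gcd_euclid hG haK0 hbK0 hst hcg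
        have hk3c : (w0⁻¹ * u.coeff 0) * c = a * k3 := congrArg Subtype.val hk3
        have heq : w0⁻¹ * (u.coeff 0 * c / a) = (k3 : L) := by
          field_simp
          field_simp at hk3c
          linear_combination hk3c
        rw [heq]; exact k3.2
    · refine ⟨u.coeff 0, hu, ?_, fun h' => absurd h' hmn', fun w0 hw0 hsK _ => hsK⟩
      rw [inv_mul_cancel₀ hu]; exact K.one_mem
  -- the candidate gcd
  have hdmem : (C lam * (X ^ m * h)).coeff 0 ∈ K := by
    rcases Nat.eq_zero_or_pos m with hm0 | hmpos
    · have : (C lam * (X ^ m * h)).coeff 0 = lam := by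
        rw [coeff_C_mul, mul_coeff_zero, hh1, hm0]
        simp
      rw [this]
      have := hP4 1 one_ne_zero ?_ ?_
      · simpa using this
      · have := f.2
        rw [hfu, hm0] at this
        simpa [mem_composite] using this
      · intro hmn'
        have := g.2
        rw [hgv, ← hmn', hm0] at this
        simpa [mem_composite] using this
    · have : (C lam * (X ^ m * h)).coeff 0 = 0 := by
        rw [coeff_C_mul, mul_coeff_zero, coeff_X_pow, if_neg (by omega)]
        ring
      rw [this]; exact K.zero_mem
  refine ⟨⟨C lam * (X ^ m * h), hdmem⟩, ?_, ?_, ?_⟩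
  · -- d ∣ f
    refine comp_dvd_iff.2 ⟨C lam⁻¹ * u', ?_, ?_⟩
    · rw [coeff_C_mul, hu'0]; exact hP2
    · show (f : Polynomial L) = C lam * (X ^ m * h) * (C lam⁻¹ * u')
      have key : C lam * (X ^ m * h) * (C lam⁻¹ * u') = C (lam * lam⁻¹) * (X ^ m * (h * u')) := by
        rw [C_mul]; ring
      rw [key, mul_inv_cancel₀ hlam0, C_1, one_mul, ← hu']
      exact hfu
  · -- d ∣ g
    refine comp_dvd_iff.2 ⟨C lam⁻¹ * (X ^ (n - m) * v'), ?_, ?_⟩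
    · rcases eq_or_lt_of_le hmn with hmn' | hmn'
      · rw [coeff_C_mul, mul_coeff_zero, hmn', Nat.sub_self]
        simp only [pow_zero, coeff_one_zero, one_mul]
        rw [hv'0]
        exact hP3 hmn'
      · rw [coeff_C_mul, mul_coeff_zero, coeff_X_pow, if_neg (by omega)]
        simpa using K.zero_mem
    · show (g : Polynomial L) = C lam * (X ^ m * h) * (C lam⁻¹ * (X ^ (n - m) * v'))
      have hxx : (X : Polynomial L) ^ m * X ^ (n - m) = X ^ n := by
        rw [← pow_add, Nat.add_sub_cancel' hmn]
      have key : C lam * (X ^ m * h) * (C lam⁻¹ * (X ^ (n - m) * v')) =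
          C (lam * lam⁻¹) * ((X ^ m * X ^ (n - m)) * (h * v')) := by
        rw [C_mul]; ring
      rw [key, hxx, mul_inv_cancel₀ hlam0, C_1, one_mul, ← hv']
      exact hgv
  · -- greatest
    intro e he1 he2
    obtain ⟨r, hrK, hr⟩ := comp_dvd_iff.1 he1
    obtain ⟨r2, hr2K, hr2⟩ := comp_dvd_iff.1 he2
    have hfne : (f : Polynomial L) ≠ 0 := by
      rw [hfu]
      exact mul_ne_zero (pow_ne_zero m (X_ne_zero (R := L))) hune
    have hene : (e : Polynomial L) ≠ 0 := by
      intro h0'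
      apply hfne
      rw [hr, h0', zero_mul]
    obtain ⟨j, w, hew, hw0⟩ := exists_X_pow_factor (e : Polynomial L) hene
    have hdvdf : (X : Polynomial L) ^ j * w ∣ X ^ m * u := ⟨r, by rw [← hew, ← hfu]; exact hr⟩
    have hdvdg : (X : Polynomial L) ^ j * w ∣ X ^ n * v := ⟨r2, by rw [← hew, ← hgv]; exact hr2⟩
    obtain ⟨hjm, hwu⟩ := X_pow_mul_dvd hw0 hu hdvdf
    obtain ⟨hjn, hwv⟩ := X_pow_mul_dvd hw0 hv hdvdg
    obtain ⟨h1p, hh1p⟩ := hgr w hwu hwv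
    refine comp_dvd_iff.2 ⟨C lam * (X ^ (m - j) * h1p), ?_, ?_⟩
    · -- coefficient condition
      rcases lt_or_eq_of_le hjm with hjm' | hjm'
      · rw [coeff_C_mul, mul_coeff_zero, coeff_X_pow, if_neg (by omega)]
        simpa using K.zero_mem
      · rw [coeff_C_mul, mul_coeff_zero, hjm', Nat.sub_self]
        simp only [pow_zero, coeff_one_zero, one_mul]
        -- lam * h1p.coeff 0 = (w.coeff 0)⁻¹ * lam ∈ K by hP4
        have hwh1 : w.coeff 0 * h1p.coeff 0 = 1 := by
          rw [← mul_coeff_zero, ← hh1p, hh1]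
        have hh1p0 : h1p.coeff 0 = (w.coeff 0)⁻¹ :=
          eq_inv_of_mul_eq_one_left (by linear_combination hwh1)
        rw [hh1p0, mul_comm]
        -- u = w * r
        have hur : u = w * r := by
          apply mul_left_cancel₀ (pow_ne_zero m (X_ne_zero (R := L)))
          calc X ^ m * u = (f : Polynomial L) := hfu.symm
            _ = X ^ j * w * r := by rw [hr, hew]
            _ = X ^ m * (w * r) := by rw [hjm']; ring
        have hsK : (w.coeff 0)⁻¹ * u.coeff 0 ∈ K := by
          have : (w.coeff 0)⁻¹ * u.coeff 0 = r.coeff 0 := by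
            rw [hur, mul_coeff_zero, inv_mul_cancel_left₀ hw0]
          rw [this]; exact hrK
        refine hP4 (w.coeff 0) hw0 hsK ?_
        intro hmn'
        have hvr : v = w * r2 := by
          apply mul_left_cancel₀ (pow_ne_zero n (X_ne_zero (R := L)))
          calc X ^ n * v = (g : Polynomial L) := hgv.symm
            _ = X ^ j * w * r2 := by rw [hr2, hew]
            _ = X ^ n * (w * r2) := by rw [hjm', hmn']; ring
        have : (w.coeff 0)⁻¹ * v.coeff 0 = r2.coeff 0 := by
          rw [hvr, mul_coeff_zero, inv_mul_cancel_left₀ hw0]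
        rw [this]; exact hr2K
    · -- the factorization
      show C lam * (X ^ m * h) = (e : Polynomial L) * (C lam * (X ^ (m - j) * h1p))
      have hxx2 : (X : Polynomial L) ^ j * X ^ (m - j) = X ^ m := by
        rw [← pow_add, Nat.add_sub_cancel' hjm]
      have key : (X ^ j * w) * (C lam * (X ^ (m - j) * h1p)) =
          C lam * ((X ^ j * X ^ (m - j)) * (w * h1p)) := by ring
      rw [hew, key, hxx2, ← hh1p]

lemma gcd_of_frac_gcd (K : Subring L) (hF : FracOfField K) (hG : IsGCDDomain ↥K) :
    IsGCDDomain ↥(composite K) := by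
  intro f g hf hg
  obtain ⟨m, u, hfu, hu⟩ := exists_X_pow_factor (f : Polynomial L) (comp_coe_ne_zero hf)
  obtain ⟨n, v, hgv, hv⟩ := exists_X_pow_factor (g : Polynomial L) (comp_coe_ne_zero hg)
  rcases le_total m n with hmn | hmn
  · exact backward_aux K hF hG f g m n u v hu hv hfu hgv hmn
  · obtain ⟨d, h1, h2, h3⟩ := backward_aux K hF hG g f n m v u hv hu hgv hfu hmn
    exact ⟨d, h2, h1, fun c hc1 hc2 => h3 c hc2 hc1⟩

end Backward

theorem stmt_19 {L : Type*} [Field L] (K : Subring L) (hKne : K ≠ ⊤) :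
    IsGCDDomain ↥(composite K) ↔ (FracOfField K ∧ IsGCDDomain ↥K) := by
  constructor
  · intro h
    exact ⟨frac_of_gcd K hKne h, gcdK_of_gcd K h⟩
  · rintro ⟨hF, hG⟩
    exact gcd_of_frac_gcd K hF hG
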